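/- A subset B of the dual V' of a countably-normed space V is strongly bounded if and only if there exists k such that B ⊆ V_k' and B is bounded in the operator norm ‖·‖_{-k} of V_k'. -/

import Mathlib

open scoped Pointwise

/-- A set `B` in the dual `V'` of a countably-normed space is strongly bounded iff there is
a `k` such that `B ⊆ V_k'` and `B` is bounded in the operator norm of `V_k'` — i.e. iff
there are `k` and `C` with `|⟨f, v⟩| ≤ C ‖v‖_k` for all `f ∈ B`, `v ∈ V`. -/
theorem stmt15 {V : Type*} [AddCommGroup V] [Module ℝ V] [TopologicalSpace V]
    (p : SeminormFamily ℝ V ℕ) (hp : WithSeminorms p) (hmono : Monotone p)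
    (B : Set (V →L[ℝ] ℝ)) :
    (∀ D : Set V, Bornology.IsVonNBounded ℝ D → ∀ ε > (0 : ℝ),
        ∃ lam > (0 : ℝ), B ⊆ lam • {f : V →L[ℝ] ℝ | ∀ v ∈ D, |f v| < ε}) ↔
      (∃ (k : ℕ) (C : ℝ), ∀ f ∈ B, ∀ v : V, |f v| ≤ C * p k v) := by
  constructor
  · intro hB
    by_contra hno
    push_neg at hno
    choose f hfB v hv using fun k => hno k (((k : ℝ) + 1) ^ 2)
    have hfv_pos : ∀ k, 0 < |f k (v k)| := fun k =>
      lt_of_le_of_lt (by positivity) (hv k)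
    set w : ℕ → V := fun k => ((((k : ℝ) + 1) / |f k (v k)|) • v k) with hw
    have hfw : ∀ k, |f k (w k)| = (k : ℝ) + 1 := by
      intro k
      have h0 : (f k (v k)) ≠ 0 := by
        intro h; have := hfv_pos k; rw [h] at this; simp at this
      simp only [hw, map_smul, smul_eq_mul, abs_mul, abs_div, abs_abs]
      rw [abs_of_nonneg (by positivity : (0:ℝ) ≤ (k : ℝ) + 1)]
      field_simp
    have hpw : ∀ k, p k (w k) < 1 / ((k : ℝ) + 1) := by
      intro k
      have hpk : p k (w k) = (((k : ℝ) + 1) / |f k (v k)|) * p k (v k) := by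
        rw [hw]
        simp only [map_smul_eq_mul, Real.norm_eq_abs, abs_div, abs_abs]
        rw [abs_of_nonneg (by positivity : (0:ℝ) ≤ (k : ℝ) + 1)]
      rw [hpk]
      rw [div_mul_eq_mul_div, div_lt_div_iff₀ (hfv_pos k) (by positivity)]
      have := hv k
      nlinarith [apply_nonneg (p k) (v k), hfv_pos k]
    have hD : Bornology.IsVonNBounded ℝ (Set.range w) := by
      rw [hp.isVonNBounded_iff_seminorm_bounded]
      intro i
      refine ⟨1 + ∑ j ∈ Finset.range (i + 1), p i (w j), by positivity, ?_⟩
      rintro x ⟨k, rfl⟩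
      by_cases hk : k ≤ i
      · have hmem : k ∈ Finset.range (i + 1) := Finset.mem_range.mpr (by omega)
        have hle : p i (w k) ≤ ∑ j ∈ Finset.range (i + 1), p i (w j) :=
          Finset.single_le_sum (fun j _ => apply_nonneg (p i) (w j)) hmem
        linarith
      · have hik : i ≤ k := by omega
        have h1 : p i (w k) ≤ p k (w k) := hmono hik (w k)
        have h2 : p k (w k) < 1 / ((k : ℝ) + 1) := hpw k
        have h3 : (1 : ℝ) / ((k : ℝ) + 1) ≤ 1 := by
          rw [div_le_one (by positivity)]; linarith [Nat.cast_nonneg (α := ℝ) k]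
        have h4 : 0 ≤ ∑ j ∈ Finset.range (i + 1), p i (w j) :=
          Finset.sum_nonneg fun j _ => apply_nonneg (p i) (w j)
        linarith
    obtain ⟨lam, hlam, hsub⟩ := hB _ hD 1 one_pos
    obtain ⟨k, hk⟩ := exists_nat_gt lam
    obtain ⟨g, hg, hfg⟩ := hsub (hfB k)
    have hgw : |g (w k)| < 1 := hg (w k) ⟨k, rfl⟩
    have habs : |f k (w k)| = lam * |g (w k)| := by
      rw [← hfg]
      simp [abs_mul, abs_of_pos hlam]
    rw [hfw k] at habs
    nlinarith [hgw, Nat.cast_nonneg (α := ℝ) k]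
  · rintro ⟨k, C, hC⟩ D hD ε hε
    obtain ⟨M, hM0, hM⟩ := (hp.isVonNBounded_iff_seminorm_bounded.mp hD) k
    have hCmax : (0:ℝ) ≤ max C 0 := le_max_right C 0
    set lam : ℝ := (max C 0 * M + ε) / ε with hlamdef
    have hlam : 0 < lam := div_pos (by nlinarith) hε
    refine ⟨lam, hlam, ?_⟩
    intro f hf
    rw [Set.mem_smul_set]
    refine ⟨lam⁻¹ • f, ?_, ?_⟩
    · intro x hx
      have h1 : |f x| ≤ max C 0 * M := by
        have := hC f hf x
        have h2 := hM x hx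
        have h3 : C * p k x ≤ max C 0 * p k x :=
          mul_le_mul_of_nonneg_right (le_max_left C 0) (apply_nonneg (p k) x)
        nlinarith [apply_nonneg (p k) x]
      have h2 : |f x| < lam * ε := by
        have : lam * ε = max C 0 * M + ε := by
          rw [hlamdef]; field_simp
        nlinarith
      simp only [ContinuousLinearMap.coe_smul', Pi.smul_apply, smul_eq_mul, abs_mul, abs_inv,
        abs_of_pos hlam]
      rw [inv_mul_lt_iff₀ hlam]
      linarith [h2]
    · rw [smul_smul, mul_inv_cancel₀ hlam.ne', one_smul]
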